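/- Let G=(V,E) be a finite simple graph and uv ∈ E. The set F = {x ∈ COR(G) : x_u = x_{uv} = x_v} is a face of COR(G), and there is an affine map taking F onto the correlation polytope COR(G / uv) of the graph obtained from G by contracting the edge uv. Consequently xc(COR(G / uv)) ≤ xc(COR(G)). -/

import Mathlib

open Set

noncomputable section

/-- A polytope in `ℝ^ι`: the convex hull of a finite set of points. -/
def IsPolytope {ι : Type*} (P : Set (ι → ℝ)) : Prop :=
  ∃ S : Finset (ι → ℝ), P = convexHull ℝ (S : Set (ι → ℝ))

/-- `F` is a face of `P`: the set of points of `P` maximizing some linear functional. -/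
def IsFace {ι : Type*} (P F : Set (ι → ℝ)) : Prop :=
  ∃ (f : (ι → ℝ) →ₗ[ℝ] ℝ) (c : ℝ), (∀ x ∈ P, f x ≤ c) ∧ F = {x ∈ P | f x = c}

/-- The dimension of a polytope: the dimension of (the direction of) its affine hull. -/
def polyDim {ι : Type*} (P : Set (ι → ℝ)) : ℕ :=
  Module.finrank ℝ (vectorSpan ℝ P)

/-- A facet of a polytope: a proper face of codimension 1. -/
def IsFacet {ι : Type*} (P F : Set (ι → ℝ)) : Prop :=
  IsFace P F ∧ F ≠ P ∧ polyDim F + 1 = polyDim P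

/-- The number of facets of a polytope. -/
def facetCount {ι : Type*} (P : Set (ι → ℝ)) : ℕ :=
  Nat.card {F : Set (ι → ℝ) // IsFacet P F}

/-- `Q ⊆ ℝ^p` is an extension of `P`: a polytope mapping onto `P` under an affine map. -/
def IsExtensionOf {p : ℕ} {ι : Type*} (Q : Set (Fin p → ℝ)) (P : Set (ι → ℝ)) : Prop :=
  IsPolytope Q ∧ ∃ π : (Fin p → ℝ) →ᵃ[ℝ] (ι → ℝ), π '' Q = P

/-- The extension complexity of `P`: the minimum number of facets of an extension of `P`. -/
def xc {ι : Type*} (P : Set (ι → ℝ)) : ℕ :=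
  sInf { m | ∃ (p : ℕ) (Q : Set (Fin p → ℝ)), IsExtensionOf Q P ∧ facetCount Q = m }

open scoped Classical in
/-- The correlation polytope of a graph `G = (V,E)`: the convex hull in `ℝ^{V ∪ E}` of the
vectors `(χ(X), χ(E(X)))` over all vertex subsets `X ⊆ V`. -/
def corPolytope {V : Type*} (G : SimpleGraph V) : Set ((V ⊕ ↥G.edgeSet) → ℝ) :=
  convexHull ℝ {x | ∃ X : Set V,
    (∀ v : V, x (Sum.inl v) = if v ∈ X then 1 else 0) ∧
    (∀ e : G.edgeSet, x (Sum.inr e) = if ∀ v ∈ (e : Sym2 V), v ∈ X then 1 else 0)}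

/-- `H` is a minor of `G`: there are pairwise disjoint connected branch sets in `G`,
one for each vertex of `H`, with an edge of `G` between the branch sets of any two
vertices adjacent in `H`. -/
def SimpleGraph.IsMinorOf {W V : Type*} (H : SimpleGraph W) (G : SimpleGraph V) : Prop :=
  ∃ B : W → Set V,
    (∀ w, (G.induce (B w)).Connected) ∧
    (Pairwise fun w w' => Disjoint (B w) (B w')) ∧
    (∀ ⦃w w'⦄, H.Adj w w' → ∃ u ∈ B w, ∃ v ∈ B w', G.Adj u v)

/-- A tree-decomposition of a graph `G`. -/
structure TreeDecomp {V : Type*} (G : SimpleGraph V) where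
  ι : Type
  finite : Finite ι
  T : SimpleGraph ι
  isTree : T.IsTree
  B : ι → Set V
  bag_finite : ∀ t, (B t).Finite
  vertex_cover : ∀ v : V, ∃ t, v ∈ B t
  edge_cover : ∀ ⦃u v : V⦄, G.Adj u v → ∃ t, u ∈ B t ∧ v ∈ B t
  subtree : ∀ v : V, (T.induce {t | v ∈ B t}).Connected

/-- The width of a tree-decomposition: `max |B_t| - 1`. -/
def TreeDecomp.width {V : Type*} {G : SimpleGraph V} (D : TreeDecomp G) : ℕ :=
  (⨆ t, (D.B t).ncard) - 1

/-- The treewidth of a graph: minimum width of a tree-decomposition. -/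
def treewidth {V : Type*} (G : SimpleGraph V) : ℕ :=
  sInf { w | ∃ D : TreeDecomp G, D.width = w }

/-- The `t × t` grid graph: `(a,b)` adjacent to `(a',b')` iff `|a-a'| + |b-b'| = 1`. -/
def gridGraph (t : ℕ) : SimpleGraph (Fin t × Fin t) where
  Adj p q := ((p.1 : ℤ) - (q.1 : ℤ)).natAbs + ((p.2 : ℤ) - (q.2 : ℤ)).natAbs = 1
  symm := by constructor; intro p q h; omega
  loopless := by constructor; intro p h; omega

/-- The graph `G'` obtained from `G` by adding, for each edge `e = uv`, a new vertex
adjacent exactly to `u` and `v` (keeping all edges of `G`). -/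
def addEdgeVertices {V : Type*} (G : SimpleGraph V) : SimpleGraph (V ⊕ ↥G.edgeSet) where
  Adj a b :=
    match a, b with
    | Sum.inl u, Sum.inl v => G.Adj u v
    | Sum.inl u, Sum.inr e => u ∈ (e : Sym2 V)
    | Sum.inr e, Sum.inl u => u ∈ (e : Sym2 V)
    | Sum.inr _, Sum.inr _ => False
  symm := by
    constructor
    rintro (u | e) (v | f) h
    · exact h.symm
    · exact h
    · exact h
    · exact h
  loopless := by
    constructor
    rintro (u | e) h
    · exact G.loopless.irrefl u h
    · exact h

/-- The graph `G / uv` obtained from `G` by contracting the edge `uv`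
(the vertex `v` is merged into `u`). -/
def contractEdge {V : Type*} (G : SimpleGraph V) (u v : V) :
    SimpleGraph {w : V // w ≠ v} where
  Adj a b := a ≠ b ∧
    (G.Adj a.1 b.1 ∨ (a.1 = u ∧ G.Adj v b.1) ∨ (b.1 = u ∧ G.Adj a.1 v))
  symm := by
    constructor
    rintro a b ⟨hne, h⟩
    refine ⟨hne.symm, ?_⟩
    rcases h with h | ⟨h1, h2⟩ | ⟨h1, h2⟩
    · exact Or.inl h.symm
    · exact Or.inr (Or.inr ⟨h1, h2.symm⟩)
    · exact Or.inr (Or.inl ⟨h1, h2.symm⟩)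
  loopless := by constructor; rintro a ⟨hne, _⟩; exact hne rfl

lemma deleteEdges_edgeSet_subset {V : Type*} (G : SimpleGraph V) (s : Set (Sym2 V)) :
    (G.deleteEdges s).edgeSet ⊆ G.edgeSet := by
  rw [SimpleGraph.edgeSet_deleteEdges]
  exact Set.diff_subset

lemma induce_edge_mem {V : Type*} (G : SimpleGraph V) (s : Set V) (e : Sym2 ↥s)
    (he : e ∈ (G.induce s).edgeSet) : Sym2.map Subtype.val e ∈ G.edgeSet := by
  induction e using Sym2.ind with
  | _ a b => simpa using he




open scoped Classical

variable {ι : Type*}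

/-- halfspace bound extends to hull -/
lemma hull_le {s : Set (ι → ℝ)} {f : (ι → ℝ) →ₗ[ℝ] ℝ} {c : ℝ}
    (hs : ∀ x ∈ s, f x ≤ c) : ∀ x ∈ convexHull ℝ s, f x ≤ c := by
  intro x hx
  have : convexHull ℝ s ⊆ {w | f w ≤ c} :=
    convexHull_min hs (convex_halfSpace_le f.isLinear c)
  exact this hx

lemma hull_eq {s : Set (ι → ℝ)} {f : (ι → ℝ) →ₗ[ℝ] ℝ} {c : ℝ}
    (hs : ∀ x ∈ s, f x = c) : ∀ x ∈ convexHull ℝ s, f x = c := by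
  intro x hx
  have : convexHull ℝ s ⊆ {w | f w = c} :=
    convexHull_min hs (convex_hyperplane f.isLinear c)
  exact this hx

/-- Core face lemma. -/
lemma faceEq {s : Set (ι → ℝ)} {f : (ι → ℝ) →ₗ[ℝ] ℝ} {c : ℝ}
    (hs : ∀ x ∈ s, f x ≤ c) :
    {x ∈ convexHull ℝ s | f x = c} = convexHull ℝ {x ∈ s | f x = c} := by
  apply Set.Subset.antisymm
  · rintro x ⟨hx, hfx⟩
    rw [convexHull_eq] at hx
    obtain ⟨κ, t, w, z, hw0, hw1, hz, hcm⟩ := hx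
    have hx' : x = ∑ i ∈ t, w i • z i := by
      rw [← hcm, Finset.centerMass_eq_of_sum_1 _ _ hw1]
    have hfx' : ∑ i ∈ t, w i * (c - f (z i)) = 0 := by
      have : f x = ∑ i ∈ t, w i * f (z i) := by
        rw [hx', map_sum]; simp [mul_comm]
      simp only [mul_sub, Finset.sum_sub_distrib, ← Finset.sum_mul, hw1, one_mul]
      rw [← this, hfx]; ring
    have hall : ∀ i ∈ t, w i * (c - f (z i)) = 0 := by
      refine (Finset.sum_eq_zero_iff_of_nonneg ?_).mp hfx'
      intro i hi
      exact mul_nonneg (hw0 i hi) (by linarith [hs (z i) (hz i hi)])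
    set t' := t.filter (fun i => w i ≠ 0) with ht'
    have hsum' : ∑ i ∈ t', w i = 1 := by
      rw [ht', Finset.sum_filter_ne_zero, hw1]
    have hxcm : x = t'.centerMass w z := by
      rw [Finset.centerMass_eq_of_sum_1 _ _ hsum', hx']
      rw [ht']
      rw [Finset.sum_filter_of_ne]
      intro i hi hne
      intro hw
      exact hne (by rw [hw, zero_smul])
    rw [hxcm]
    apply Finset.centerMass_mem_convexHull _ (fun i hi => hw0 i (Finset.mem_filter.mp hi).1)
      (by rw [hsum']; norm_num)
    intro i hi
    rw [Finset.mem_filter] at hi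
    refine ⟨hz i hi.1, ?_⟩
    have := hall i hi.1
    rcases mul_eq_zero.mp this with h | h
    · exact absurd h hi.2
    · linarith
  · intro x hx
    refine ⟨convexHull_mono (fun y hy => hy.1) hx, ?_⟩
    exact hull_eq (fun y hy => hy.2) x hx

lemma filter_coe (S : Finset (ι → ℝ)) (f : (ι → ℝ) →ₗ[ℝ] ℝ) (c : ℝ) :
    ((S.filter (fun s => f s = c)) : Set (ι → ℝ)) = {x ∈ (S : Set (ι → ℝ)) | f x = c} := by
  ext x; simp

/-- B: characterization of faces of a polytope. -/
lemma isFace_iff {S : Finset (ι → ℝ)} {F : Set (ι → ℝ)} :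
    IsFace (convexHull ℝ (S : Set (ι → ℝ))) F ↔
      ∃ (f : (ι → ℝ) →ₗ[ℝ] ℝ) (c : ℝ), (∀ s ∈ S, f s ≤ c) ∧
        F = convexHull ℝ ((S.filter (fun s => f s = c)) : Set (ι → ℝ)) := by
  constructor
  · rintro ⟨f, c, hle, rfl⟩
    refine ⟨f, c, fun s hs => hle s (subset_convexHull ℝ _ hs), ?_⟩
    rw [filter_coe, ← faceEq (s := (S : Set (ι → ℝ)))
      (fun s hs => hle s (subset_convexHull ℝ _ hs))]
  · rintro ⟨f, c, hle, rfl⟩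
    refine ⟨f, c, hull_le hle, ?_⟩
    rw [filter_coe, ← faceEq (s := (S : Set (ι → ℝ))) (fun x hx => hle x hx)]

/-- C -/
lemma polyDim_convexHull (s : Set (ι → ℝ)) :
    polyDim (convexHull ℝ s) = Module.finrank ℝ (vectorSpan ℝ s) := by
  unfold polyDim
  rw [← direction_affineSpan, ← direction_affineSpan ℝ s, affineSpan_convexHull]

/-- faces are subsets -/
lemma IsFace.subset {P F : Set (ι → ℝ)} (h : IsFace P F) : F ⊆ P := by
  obtain ⟨f, c, _, rfl⟩ := h; exact fun x hx => hx.1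

lemma isFace_self (P : Set (ι → ℝ)) : IsFace P P :=
  ⟨0, 0, fun x _ => le_refl _, by simp⟩

/-- D: squeeze -/
lemma face_squeeze [Finite ι] {Q F₁ F₂ : Set (ι → ℝ)} (hF₁ : IsFace Q F₁)
    (hne : F₁.Nonempty) (hsub : F₁ ⊆ F₂) (hF₂Q : F₂ ⊆ Q)
    (hdim : polyDim F₂ ≤ polyDim F₁) : F₁ = F₂ := by
  have := Fintype.ofFinite ι
  obtain ⟨f, c, hle, hF₁eq⟩ := hF₁
  have hvs : vectorSpan ℝ F₁ = vectorSpan ℝ F₂ :=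
    Submodule.eq_of_le_of_finrank_le (vectorSpan_mono ℝ hsub) hdim
  obtain ⟨p, hp⟩ := hne
  have haff : F₂ ⊆ (affineSpan ℝ F₁ : Set (ι → ℝ)) := by
    intro x hx
    have hx1 : x ∈ affineSpan ℝ F₂ := subset_affineSpan ℝ _ hx
    have hps : p ∈ affineSpan ℝ F₂ := subset_affineSpan ℝ _ (hsub hp)
    have hv : x - p ∈ vectorSpan ℝ F₁ := by
      rw [hvs, ← direction_affineSpan]
      have := AffineSubspace.vsub_mem_direction hx1 hps
      simpa using this
    have := AffineSubspace.vadd_mem_of_mem_direction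
      (by rw [direction_affineSpan]; exact hv) (subset_affineSpan ℝ _ hp)
    simpa using this
  have hfc : ∀ x ∈ affineSpan ℝ F₁, f x = c := by
    intro x hx
    have hF₁A : F₁ ⊆ (AffineSubspace.comap f.toAffineMap
        (AffineSubspace.mk' c (⊥ : Submodule ℝ ℝ)) : Set (ι → ℝ)) := by
      intro y hy
      have : f y = c := by rw [hF₁eq] at hy; exact hy.2
      show f.toAffineMap y ∈ AffineSubspace.mk' c (⊥ : Submodule ℝ ℝ)
      rw [AffineSubspace.mem_mk']
      simp [this, sub_eq_zero]
    have := (affineSpan_le.mpr hF₁A) hx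
    have h2 : f.toAffineMap x ∈ AffineSubspace.mk' c (⊥ : Submodule ℝ ℝ) := this
    rw [AffineSubspace.mem_mk'] at h2
    simpa [sub_eq_zero] using h2
  apply Set.Subset.antisymm hsub
  intro x hx
  rw [hF₁eq]
  exact ⟨hF₂Q hx, hfc x (haff hx)⟩

/-- E: finiteness of facets -/
lemma finite_facets (S : Finset (ι → ℝ)) :
    Finite {F : Set (ι → ℝ) // IsFacet (convexHull ℝ (S : Set (ι → ℝ))) F} := by
  have h : {F : Set (ι → ℝ) | IsFacet (convexHull ℝ (S : Set (ι → ℝ))) F} ⊆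
      (fun T : Finset (ι → ℝ) => convexHull ℝ (T : Set (ι → ℝ))) '' ↑S.powerset := by
    rintro F hF
    obtain ⟨f, c, hle, rfl⟩ := isFace_iff.mp hF.1
    exact ⟨S.filter (fun s => f s = c),
      Finset.mem_coe.mpr (Finset.mem_powerset.mpr (Finset.filter_subset _ _)), rfl⟩
  have : {F : Set (ι → ℝ) | IsFacet (convexHull ℝ (S : Set (ι → ℝ))) F}.Finite :=
    Set.Finite.subset (Set.Finite.image _ (S.powerset.finite_toSet)) h
  exact this.to_subtype

lemma facetCount_empty : facetCount (∅ : Set (ι → ℝ)) = 0 := by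
  have : IsEmpty {F : Set (ι → ℝ) // IsFacet (∅ : Set (ι → ℝ)) F} := by
    constructor
    rintro ⟨F, ⟨f, c, hle, hFeq⟩, hne, _⟩
    apply hne
    rw [hFeq]; ext x; simp
  simp [facetCount, Nat.card_of_isEmpty]

/-- G1: rotation away from a facet. -/
lemma rotate_away {S : Finset (ι → ℝ)} {f h : (ι → ℝ) →ₗ[ℝ] ℝ} {c e : ℝ}
    (hf : ∀ s ∈ S, f s ≤ c) (hh : ∀ s ∈ S, h s ≤ e)
    (hsub : ∀ s ∈ S, h s = e → f s = c)
    (hTS : ∃ s ∈ S, f s ≠ c) :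
    ∃ (h' : (ι → ℝ) →ₗ[ℝ] ℝ) (e' : ℝ), (∀ s ∈ S, h' s ≤ e') ∧
      (∀ s ∈ S, h s = e → h' s = e') ∧
      (∃ s ∈ S, h' s = e' ∧ f s ≠ c) ∧
      (∀ s ∈ S, h' s = e' → h s = e ∨ f s ≠ c) := by
  set crit := S.filter (fun s => f s ≠ c) with hcrit
  have hcritne : crit.Nonempty := by
    obtain ⟨s, hs, hsc⟩ := hTS
    exact ⟨s, Finset.mem_filter.mpr ⟨hs, hsc⟩⟩
  have hpos : ∀ s ∈ crit, 0 < (e - h s) / (c - f s) := by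
    intro s hs
    rw [Finset.mem_filter] at hs
    have h1 : f s < c := lt_of_le_of_ne (hf s hs.1) hs.2
    have h2 : h s < e := by
      refine lt_of_le_of_ne (hh s hs.1) ?_
      intro hse
      exact hs.2 (hsub s hs.1 hse)
    exact div_pos (by linarith) (by linarith)
  set t := crit.inf' hcritne (fun s => (e - h s) / (c - f s)) with ht
  have htpos : 0 < t := by
    rw [ht, Finset.lt_inf'_iff]
    exact hpos
  refine ⟨h - t • f, e - t * c, ?_, ?_, ?_, ?_⟩
  · intro s hs
    simp only [LinearMap.sub_apply, LinearMap.smul_apply, smul_eq_mul]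
    by_cases hfs : f s = c
    · have := hh s hs
      rw [hfs]; linarith
    · have h1 : f s < c := lt_of_le_of_ne (hf s hs) hfs
      have h2 : t ≤ (e - h s) / (c - f s) := Finset.inf'_le _ (Finset.mem_filter.mpr ⟨hs, hfs⟩)
      have h3 : t * (c - f s) ≤ e - h s := (le_div_iff₀ (by linarith)).mp h2
      nlinarith [h3]
  · intro s hs hse
    have := hsub s hs hse
    simp only [LinearMap.sub_apply, LinearMap.smul_apply, smul_eq_mul, hse, this]
  · obtain ⟨s₀, hs₀, hs₀eq⟩ := Finset.exists_mem_eq_inf' hcritne (fun s => (e - h s) / (c - f s))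
    rw [Finset.mem_filter] at hs₀
    refine ⟨s₀, hs₀.1, ?_, hs₀.2⟩
    simp only [LinearMap.sub_apply, LinearMap.smul_apply, smul_eq_mul]
    have h1 : f s₀ < c := lt_of_le_of_ne (hf s₀ hs₀.1) hs₀.2
    have h5 : t = (e - h s₀) / (c - f s₀) := hs₀eq
    have h4 : t * (c - f s₀) = e - h s₀ := by
      rw [h5, div_mul_cancel₀ _ (by linarith : c - f s₀ ≠ 0)]
    have h6 : t * c - t * f s₀ = e - h s₀ := by rw [← mul_sub]; exact h4
    linarith
  · intro s hs hse
    by_cases hfs : f s = c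
    · left
      simp only [LinearMap.sub_apply, LinearMap.smul_apply, smul_eq_mul, hfs] at hse
      have : h s = e := by linarith [hse]
      exact this
    · right; exact hfs

/-- G2: growing rotation. -/
lemma rotate_grow {S : Finset (ι → ℝ)} {h : (ι → ℝ) →ₗ[ℝ] ℝ} {e : ℝ}
    (hh : ∀ s ∈ S, h s ≤ e) {l : (ι → ℝ) →ₗ[ℝ] ℝ} {t₀ : ι → ℝ}
    (hl : ∀ s ∈ S, h s = e → l s = l t₀)
    (hs0 : ∃ s ∈ S, h s ≠ e ∧ l t₀ < l s)
    (hs1 : ∃ s ∈ S, h s ≠ e ∧ l s ≤ l t₀) :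
    ∃ (h' : (ι → ℝ) →ₗ[ℝ] ℝ) (e' : ℝ), (∀ s ∈ S, h' s ≤ e') ∧
      (∀ s ∈ S, h s = e → h' s = e') ∧
      (∃ s ∈ S, h' s = e' ∧ h s ≠ e) ∧
      (∃ s ∈ S, h' s ≠ e') := by
  set crit := S.filter (fun s => h s ≠ e ∧ l t₀ < l s) with hcrit
  have hcritne : crit.Nonempty := by
    obtain ⟨s, hs, hs2, hs3⟩ := hs0
    exact ⟨s, Finset.mem_filter.mpr ⟨hs, hs2, hs3⟩⟩
  have hpos : ∀ s ∈ crit, 0 < (e - h s) / (l s - l t₀) := by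
    intro s hs
    rw [Finset.mem_filter] at hs
    have h1 : h s < e := lt_of_le_of_ne (hh s hs.1) hs.2.1
    exact div_pos (by linarith) (by linarith [hs.2.2])
  set t := crit.inf' hcritne (fun s => (e - h s) / (l s - l t₀)) with ht
  have htpos : 0 < t := by rw [ht, Finset.lt_inf'_iff]; exact hpos
  refine ⟨h + t • l, e + t * l t₀, ?_, ?_, ?_, ?_⟩
  · intro s hs
    simp only [LinearMap.add_apply, LinearMap.smul_apply, smul_eq_mul]
    by_cases hse : h s = e
    · have := hl s hs hse
      rw [hse, this]
    · by_cases hls : l t₀ < l s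
      · have h2 : t ≤ (e - h s) / (l s - l t₀) :=
          Finset.inf'_le _ (Finset.mem_filter.mpr ⟨hs, hse, hls⟩)
        have h3 : t * (l s - l t₀) ≤ e - h s := (le_div_iff₀ (by linarith)).mp h2
        nlinarith [h3]
      · push_neg at hls
        have h1 : h s < e := lt_of_le_of_ne (hh s hs) hse
        nlinarith [mul_le_mul_of_nonneg_left hls (le_of_lt htpos)]
  · intro s hs hse
    simp only [LinearMap.add_apply, LinearMap.smul_apply, smul_eq_mul, hse, hl s hs hse]
  · obtain ⟨s₀, hs₀, hs₀eq⟩ := Finset.exists_mem_eq_inf' hcritne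
      (fun s => (e - h s) / (l s - l t₀))
    rw [Finset.mem_filter] at hs₀
    refine ⟨s₀, hs₀.1, ?_, hs₀.2.1⟩
    simp only [LinearMap.add_apply, LinearMap.smul_apply, smul_eq_mul]
    have h5 : t = (e - h s₀) / (l s₀ - l t₀) := hs₀eq
    have h4 : t * (l s₀ - l t₀) = e - h s₀ := by
      rw [h5, div_mul_cancel₀ _ (by linarith [hs₀.2.2] : l s₀ - l t₀ ≠ 0)]
    have h6 : t * l s₀ - t * l t₀ = e - h s₀ := by rw [← mul_sub]; exact h4
    linarith
  · obtain ⟨s, hs, hse, hls⟩ := hs1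
    refine ⟨s, hs, ?_⟩
    simp only [LinearMap.add_apply, LinearMap.smul_apply, smul_eq_mul]
    have h1 : h s < e := lt_of_le_of_ne (hh s hs) hse
    intro habs
    nlinarith [mul_le_mul_of_nonneg_left hls (le_of_lt htpos)]

set_option synthInstance.maxHeartbeats 1000000 in
set_option maxHeartbeats 1000000 in
/-- separating functional when codim ≥ 2 -/
lemma exists_sep [Finite ι] {T S : Finset (ι → ℝ)} (hTS : T ⊆ S) {t₀ : ι → ℝ} (ht₀ : t₀ ∈ T)
    (hdim : Module.finrank ℝ (vectorSpan ℝ (T : Set (ι → ℝ))) + 2 ≤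
      Module.finrank ℝ (vectorSpan ℝ (S : Set (ι → ℝ)))) :
    ∃ l : (ι → ℝ) →ₗ[ℝ] ℝ, (∀ s ∈ T, l s = l t₀) ∧
      (∃ s ∈ S, s ∉ T ∧ l t₀ < l s) ∧ (∃ s ∈ S, s ∉ T ∧ l s ≤ l t₀) := by
  have := Fintype.ofFinite ι
  set W : Submodule ℝ (ι → ℝ) := vectorSpan ℝ (T : Set (ι → ℝ)) with hW
  set D : Submodule ℝ (ι → ℝ) := vectorSpan ℝ (S : Set (ι → ℝ)) with hD
  set q : (ι → ℝ) →ₗ[ℝ] (ι → ℝ) ⧸ W := W.mkQ with hq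
  have hq0 : ∀ v : ι → ℝ, v ∈ W → q v = 0 := by
    intro v hv
    rw [hq, Submodule.mkQ_apply, Submodule.Quotient.mk_eq_zero]
    exact hv
  -- the image of D under q has rank ≥ 2
  have hrank : 2 ≤ Module.finrank ℝ (Submodule.map q D) := by
    have hrn := LinearMap.finrank_range_add_finrank_ker (q.comp D.subtype)
    have hrange : LinearMap.range (q.comp D.subtype) = Submodule.map q D := by
      rw [LinearMap.range_comp, Submodule.range_subtype]
    set K := LinearMap.ker (q.comp D.subtype) with hK
    have hmem : ∀ x : K, ((x : D) : ι → ℝ) ∈ W := by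
      intro x
      have hx : (q ∘ₗ D.subtype) (x : D) = 0 := x.2
      rw [LinearMap.comp_apply] at hx
      have hx2 : q ((x : D) : ι → ℝ) = 0 := hx
      rwa [hq, Submodule.mkQ_apply, Submodule.Quotient.mk_eq_zero] at hx2
    have hker : Module.finrank ℝ K ≤ Module.finrank ℝ W := by
      apply LinearMap.finrank_le_finrank_of_injective
        (f := LinearMap.codRestrict W (D.subtype.comp K.subtype) hmem)
      intro a b hab
      have h2 : ((a : D) : ι → ℝ) = ((b : D) : ι → ℝ) := by
        have := congrArg (Subtype.val : W → (ι → ℝ)) hab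
        exact this
      exact Subtype.ext (Subtype.ext h2)
    rw [hrange] at hrn
    have hDr : Module.finrank ℝ D = Module.finrank ℝ (Submodule.map q D)
        + Module.finrank ℝ K := hrn.symm
    omega
  -- find two independent images
  have hDspan : D = Submodule.span ℝ ((· -ᵥ t₀) '' (S : Set (ι → ℝ))) :=
    vectorSpan_eq_span_vsub_set_right ℝ (Finset.mem_coe.mpr (hTS ht₀))
  have hmapspan : Submodule.map q D = Submodule.span ℝ (q '' ((· -ᵥ t₀) '' (S : Set (ι → ℝ)))) := by
    rw [hDspan, Submodule.map_span]
  set A : Set ((ι → ℝ) ⧸ W) := q '' ((· -ᵥ t₀) '' (S : Set (ι → ℝ))) with hA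
  have hpair : ∃ y ∈ A, ∃ z ∈ A, LinearIndependent ℝ ![y, z] := by
    by_contra hno
    push_neg at hno
    have hle1 : Module.finrank ℝ (Submodule.span ℝ A) ≤ 1 := by
      by_cases h0 : ∃ y ∈ A, y ≠ 0
      · obtain ⟨y, hy, hy0⟩ := h0
        have hsub : A ⊆ (Submodule.span ℝ {y} : Set ((ι → ℝ) ⧸ W)) := by
          intro z hz
          have hnind := hno z hz y hy
          rw [linearIndependent_fin2] at hnind
          push_neg at hnind
          simp only [Matrix.cons_val_one, Matrix.head_cons, Matrix.cons_val_zero] at hnind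
          obtain ⟨a, ha⟩ := hnind hy0
          simp only [SetLike.mem_coe, Submodule.mem_span_singleton]
          exact ⟨a, ha⟩
        calc Module.finrank ℝ (Submodule.span ℝ A)
            ≤ Module.finrank ℝ (Submodule.span ℝ {y}) :=
              Submodule.finrank_mono (Submodule.span_le.mpr hsub)
          _ ≤ 1 := le_of_eq (finrank_span_singleton hy0)
      · push_neg at h0
        have hA0 : A ⊆ (⊥ : Submodule ℝ ((ι → ℝ) ⧸ W)) := by
          intro z hz; simpa using h0 z hz
        have hsb : Submodule.span ℝ A = ⊥ := le_bot_iff.mp (Submodule.span_le.mpr hA0)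
        rw [hsb]
        simp
    rw [hmapspan] at hrank
    omega
  obtain ⟨y, hy, z, hz, hind⟩ := hpair
  obtain ⟨y', ⟨s₁, hs₁S, rfl⟩, rfl⟩ := hy
  obtain ⟨z', ⟨s₂, hs₂S, rfl⟩, rfl⟩ := hz
  have hy0 : q (s₁ -ᵥ t₀) ≠ 0 := by
    have := hind.ne_zero 0
    simpa using this
  have hz0 : q (s₂ -ᵥ t₀) ≠ 0 := by
    have := hind.ne_zero 1
    simpa using this
  have hs₁T : s₁ ∉ T := by
    intro hmm
    exact hy0 (hq0 _ (vsub_mem_vectorSpan ℝ (Finset.mem_coe.mpr hmm) (Finset.mem_coe.mpr ht₀)))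
  have hs₂T : s₂ ∉ T := by
    intro hmm
    exact hz0 (hq0 _ (vsub_mem_vectorSpan ℝ (Finset.mem_coe.mpr hmm) (Finset.mem_coe.mpr ht₀)))
  -- build dual functional
  set N : Submodule ℝ ((ι → ℝ) ⧸ W) := Submodule.span ℝ {q (s₂ -ᵥ t₀)} with hN
  have hyN : N.mkQ (q (s₁ -ᵥ t₀)) ≠ 0 := by
    rw [Submodule.mkQ_apply, ne_eq, Submodule.Quotient.mk_eq_zero, hN,
      Submodule.mem_span_singleton]
    rintro ⟨a, ha⟩
    have := (linearIndependent_fin2.mp hind).2 a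
    simp at this
    exact this ha
  have hψ : ∃ ψ : Module.Dual ℝ (((ι → ℝ) ⧸ W) ⧸ N), ψ (N.mkQ (q (s₁ -ᵥ t₀))) ≠ 0 := by
    by_contra hc
    push_neg at hc
    exact hyN ((Module.forall_dual_apply_eq_zero_iff ℝ _).mp hc)
  obtain ⟨ψ, hψ⟩ := hψ
  set φ : ((ι → ℝ) ⧸ W) →ₗ[ℝ] ℝ := (ψ (N.mkQ (q (s₁ -ᵥ t₀))))⁻¹ • (ψ.comp N.mkQ) with hφ
  set l : (ι → ℝ) →ₗ[ℝ] ℝ := φ.comp q with hl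
  have hdiff : ∀ v : ι → ℝ, l v - l t₀ = φ (q (v -ᵥ t₀)) := by
    intro v
    rw [hl, vsub_eq_sub]
    simp only [LinearMap.comp_apply]
    rw [← map_sub, ← map_sub]
  have hφy : φ (q (s₁ -ᵥ t₀)) = 1 := by
    rw [hφ]
    simp only [LinearMap.smul_apply, LinearMap.comp_apply, smul_eq_mul]
    exact inv_mul_cancel₀ hψ
  have hφz : φ (q (s₂ -ᵥ t₀)) = 0 := by
    rw [hφ]
    simp only [LinearMap.smul_apply, LinearMap.comp_apply, smul_eq_mul]
    have hzz : N.mkQ (q (s₂ -ᵥ t₀)) = 0 := by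
      rw [Submodule.mkQ_apply, Submodule.Quotient.mk_eq_zero, hN]
      exact Submodule.mem_span_singleton_self _
    rw [hzz, map_zero, mul_zero]
  refine ⟨l, ?_, ⟨s₁, Finset.mem_coe.mp hs₁S, hs₁T, ?_⟩,
    ⟨s₂, Finset.mem_coe.mp hs₂S, hs₂T, ?_⟩⟩
  · intro s hsT
    have h1 := hdiff s
    rw [hq0 _ (vsub_mem_vectorSpan ℝ (Finset.mem_coe.mpr hsT) (Finset.mem_coe.mpr ht₀)),
      map_zero] at h1
    linarith
  · have h1 := hdiff s₁
    rw [hφy] at h1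
    linarith
  · have h1 := hdiff s₂
    rw [hφz] at h1
    linarith

lemma face_dim_lt [Finite ι] {S : Finset (ι → ℝ)} {F : Set (ι → ℝ)}
    (hF : IsFace (convexHull ℝ (S : Set (ι → ℝ))) F) (hne : F.Nonempty)
    (hproper : F ≠ convexHull ℝ (S : Set (ι → ℝ))) :
    polyDim F < polyDim (convexHull ℝ (S : Set (ι → ℝ))) := by
  by_contra hc
  push_neg at hc
  exact hproper (face_squeeze hF hne hF.subset (fun x hx => hx) hc)

/-- the filter-face is a face, equal to hull of filter -/
lemma filter_face_isFace {S : Finset (ι → ℝ)} {h : (ι → ℝ) →ₗ[ℝ] ℝ} {e : ℝ}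
    (hh : ∀ s ∈ S, h s ≤ e) :
    IsFace (convexHull ℝ (S : Set (ι → ℝ)))
      (convexHull ℝ ((S.filter (fun s => h s = e)) : Set (ι → ℝ))) :=
  isFace_iff.mpr ⟨h, e, hh, rfl⟩

lemma notmem_filter_face {S : Finset (ι → ℝ)} {h : (ι → ℝ) →ₗ[ℝ] ℝ} {e : ℝ}
    {s : ι → ℝ} (hs : h s ≠ e) :
    s ∉ convexHull ℝ ((S.filter (fun s => h s = e)) : Set (ι → ℝ)) := by
  intro hmem
  exact hs (hull_eq (fun x hx => (Finset.mem_filter.mp (Finset.mem_coe.mp hx)).2) s hmem)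

/-- ♥: a proper nonempty face is contained in a facet -/
lemma exists_facet_supset [Finite ι] : ∀ (n : ℕ) (S : Finset (ι → ℝ))
    (h : (ι → ℝ) →ₗ[ℝ] ℝ) (e : ℝ),
    (∀ s ∈ S, h s ≤ e) → (S.filter (fun s => h s = e)).Nonempty → (∃ s ∈ S, h s ≠ e) →
    polyDim (convexHull ℝ (S : Set (ι → ℝ))) ≤
      polyDim (convexHull ℝ ((S.filter (fun s => h s = e)) : Set (ι → ℝ))) + n + 1 →
    ∃ H, IsFacet (convexHull ℝ (S : Set (ι → ℝ))) H ∧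
      convexHull ℝ ((S.filter (fun s => h s = e)) : Set (ι → ℝ)) ⊆ H := by
  intro n
  induction n with
  | zero =>
    intro S h e hh hne hproper hbd
    set F := convexHull ℝ ((S.filter (fun s => h s = e)) : Set (ι → ℝ)) with hF
    have hface : IsFace (convexHull ℝ (S : Set (ι → ℝ))) F := filter_face_isFace hh
    have hFne : F.Nonempty := by
      obtain ⟨t, ht⟩ := hne
      exact ⟨t, subset_convexHull ℝ _ (Finset.mem_coe.mpr ht)⟩
    have hFproper : F ≠ convexHull ℝ (S : Set (ι → ℝ)) := by
      obtain ⟨s, hsS, hse⟩ := hproper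
      intro habs
      exact notmem_filter_face hse (habs ▸ subset_convexHull ℝ _ (Finset.mem_coe.mpr hsS))
    have hlt := face_dim_lt hface hFne hFproper
    exact ⟨F, ⟨hface, hFproper, by omega⟩, fun x hx => hx⟩
  | succ n IH =>
    intro S h e hh hne hproper hbd
    set T := S.filter (fun s => h s = e) with hT
    set F := convexHull ℝ (T : Set (ι → ℝ)) with hF
    by_cases hc : polyDim (convexHull ℝ (S : Set (ι → ℝ))) ≤ polyDim F + n + 1
    · exact IH S h e hh hne hproper hc
    · push_neg at hc
      have hdim2 : Module.finrank ℝ (vectorSpan ℝ (T : Set (ι → ℝ))) + 2 ≤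
          Module.finrank ℝ (vectorSpan ℝ (S : Set (ι → ℝ))) := by
        have h1 := polyDim_convexHull (T : Set (ι → ℝ))
        have h2 := polyDim_convexHull (S : Set (ι → ℝ))
        rw [← hF] at h1
        omega
      obtain ⟨t₀, ht₀⟩ := hne
      obtain ⟨l, hl, hs0, hs1⟩ := exists_sep (Finset.filter_subset _ _) ht₀ hdim2
      have hl' : ∀ s ∈ S, h s = e → l s = l t₀ := fun s hs hse =>
        hl s (Finset.mem_filter.mpr ⟨hs, hse⟩)
      have hmemT : ∀ s ∈ S, (s ∉ T ↔ h s ≠ e) := by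
        intro s hs
        rw [hT, Finset.mem_filter]
        tauto
      obtain ⟨h', e', hh', hTT', hnew, hproper'⟩ := rotate_grow hh hl'
        (by obtain ⟨s, hs, hsT, hls⟩ := hs0; exact ⟨s, hs, (hmemT s hs).mp hsT, hls⟩)
        (by obtain ⟨s, hs, hsT, hls⟩ := hs1; exact ⟨s, hs, (hmemT s hs).mp hsT, hls⟩)
      set T' := S.filter (fun s => h' s = e') with hT'
      have hTsubT' : T ⊆ T' := by
        intro s hs
        rw [hT, Finset.mem_filter] at hs
        exact Finset.mem_filter.mpr ⟨hs.1, hTT' s hs.1 hs.2⟩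
      have hT'ne : T'.Nonempty := ⟨t₀, hTsubT' ht₀⟩
      have hproper'' : ∃ s ∈ S, h' s ≠ e' := hproper'
      -- dimension grows
      have hdimgrow : polyDim F + 1 ≤ polyDim (convexHull ℝ (T' : Set (ι → ℝ))) := by
        have hsubF : F ⊆ convexHull ℝ (T' : Set (ι → ℝ)) :=
          convexHull_mono (Finset.coe_subset.mpr hTsubT')
        have hne' : F ≠ convexHull ℝ (T' : Set (ι → ℝ)) := by
          obtain ⟨s, hsS, hs'eq, hsne⟩ := hnew
          intro habs
          have hsmem : s ∈ convexHull ℝ (T' : Set (ι → ℝ)) :=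
            subset_convexHull ℝ _ (Finset.mem_coe.mpr (Finset.mem_filter.mpr ⟨hsS, hs'eq⟩))
          rw [← habs, hF, hT] at hsmem
          exact notmem_filter_face hsne hsmem
        by_contra hcon
        push_neg at hcon
        have : polyDim (convexHull ℝ (T' : Set (ι → ℝ))) ≤ polyDim F := by omega
        have hFface : IsFace (convexHull ℝ (S : Set (ι → ℝ))) F := filter_face_isFace hh
        have hFne : F.Nonempty := ⟨t₀, subset_convexHull ℝ _ (Finset.mem_coe.mpr ht₀)⟩
        exact hne' (face_squeeze hFface hFne hsubF
          ((filter_face_isFace hh').subset) this)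
      obtain ⟨H, hHfacet, hHsub⟩ := IH S h' e' hh' hT'ne hproper''
        (by rw [← hT']; omega)
      exact ⟨H, hHfacet, fun x hx =>
        hHsub (convexHull_mono (Finset.coe_subset.mpr hTsubT') hx)⟩

lemma filter_face_eq {S : Finset (ι → ℝ)} {h : (ι → ℝ) →ₗ[ℝ] ℝ} {e : ℝ}
    (hh : ∀ s ∈ S, h s ≤ e) :
    convexHull ℝ ((S.filter (fun s => h s = e)) : Set (ι → ℝ)) =
      {x ∈ convexHull ℝ (S : Set (ι → ℝ)) | h x = e} := by
  rw [filter_coe, ← faceEq (s := (S : Set (ι → ℝ))) (fun x hx => hh x hx)]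

lemma filter_nonempty_of_hull {T : Finset (ι → ℝ)} (h : (convexHull ℝ (T : Set (ι → ℝ))).Nonempty) :
    T.Nonempty := by
  by_contra hc
  rw [Finset.not_nonempty_iff_eq_empty] at hc
  rw [hc] at h
  simp at h

/-- P1 core: a nonempty facet of a nonempty facet extends to another facet. -/
lemma facet_facet_ext [Finite ι] {S : Finset (ι → ℝ)} {H F₁ : Set (ι → ℝ)}
    (hH : IsFacet (convexHull ℝ (S : Set (ι → ℝ))) H) (hHne : H.Nonempty)
    (hF₁ : IsFacet H F₁) (hF₁ne : F₁.Nonempty) :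
    ∃ H', IsFacet (convexHull ℝ (S : Set (ι → ℝ))) H' ∧ H ∩ H' = F₁ := by
  set Q := convexHull ℝ (S : Set (ι → ℝ)) with hQ
  obtain ⟨f, c, hf, hHrep⟩ := isFace_iff.mp hH.1
  set TH := S.filter (fun s => f s = c) with hTH
  have hF₁face : IsFace (convexHull ℝ (TH : Set (ι → ℝ))) F₁ := hHrep ▸ hF₁.1
  obtain ⟨g, d, hg, hF₁rep⟩ := isFace_iff.mp hF₁face
  set T₁ := TH.filter (fun s => g s = d) with hT₁
  -- the combined functional
  set crit := S.filter (fun s => f s ≠ c ∧ d < g s) with hcrit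
  have hratpos : ∀ s ∈ crit, 0 < (c - f s) / (g s - d) := by
    intro s hs
    rw [hcrit, Finset.mem_filter] at hs
    have : f s < c := lt_of_le_of_ne (hf s hs.1) hs.2.1
    exact div_pos (by linarith) (by linarith [hs.2.2])
  set ε := if hc : crit.Nonempty then (crit.inf' hc (fun s => (c - f s) / (g s - d))) / 2 else 1
    with hε
  have hεpos : 0 < ε := by
    rw [hε]
    split_ifs with hc
    · have : 0 < crit.inf' hc (fun s => (c - f s) / (g s - d)) := by
        rw [Finset.lt_inf'_iff]; exact hratpos
      linarith
    · norm_num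
  have hεlt : ∀ s ∈ crit, ε < (c - f s) / (g s - d) := by
    intro s hs
    have hc : crit.Nonempty := ⟨s, hs⟩
    rw [hε, dif_pos hc]
    have h1 : crit.inf' hc (fun s => (c - f s) / (g s - d)) ≤ (c - f s) / (g s - d) :=
      Finset.inf'_le _ hs
    have h2 : 0 < crit.inf' hc (fun s => (c - f s) / (g s - d)) := by
      rw [Finset.lt_inf'_iff]; exact hratpos
    linarith
  set h : (ι → ℝ) →ₗ[ℝ] ℝ := f + ε • g with hhdef
  set e : ℝ := c + ε * d with hedef
  have hkey : ∀ s ∈ S, (h s ≤ e ∧ (h s = e ↔ (f s = c ∧ g s = d))) := by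
    intro s hs
    simp only [hhdef, hedef, LinearMap.add_apply, LinearMap.smul_apply, smul_eq_mul]
    by_cases hfs : f s = c
    · have hgs : g s ≤ d := hg s (Finset.mem_filter.mpr ⟨hs, hfs⟩)
      constructor
      · rw [hfs]; nlinarith
      · constructor
        · intro heq
          refine ⟨hfs, ?_⟩
          rw [hfs] at heq
          have : ε * g s = ε * d := by linarith
          exact mul_left_cancel₀ (ne_of_gt hεpos) this
        · rintro ⟨-, hgd⟩
          rw [hfs, hgd]
    · have hfs' : f s < c := lt_of_le_of_ne (hf s hs) hfs
      have hstrict : f s + ε * g s < c + ε * d := by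
        by_cases hgd : g s ≤ d
        · nlinarith
        · push_neg at hgd
          have hscrit : s ∈ crit := Finset.mem_filter.mpr ⟨hs, hfs, hgd⟩
          have h3 : ε * (g s - d) < c - f s :=
            (lt_div_iff₀ (by linarith : (0:ℝ) < g s - d)).mp (hεlt s hscrit)
          nlinarith
      refine ⟨le_of_lt hstrict, ?_, ?_⟩
      · intro habs; exact absurd habs (ne_of_lt hstrict)
      · rintro ⟨habs, -⟩; exact absurd habs hfs
  have hh : ∀ s ∈ S, h s ≤ e := fun s hs => (hkey s hs).1
  have hfilter : S.filter (fun s => h s = e) = T₁ := by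
    ext s
    rw [hT₁, hTH]
    simp only [Finset.mem_filter]
    constructor
    · rintro ⟨hs, heq⟩
      have := ((hkey s hs).2).mp heq
      exact ⟨⟨hs, this.1⟩, this.2⟩
    · rintro ⟨⟨hs, hfc⟩, hgd⟩
      exact ⟨hs, ((hkey s hs).2).mpr ⟨hfc, hgd⟩⟩
  -- rotate away from H
  have hTS : ∃ s ∈ S, f s ≠ c := by
    by_contra hcon
    push_neg at hcon
    apply hH.2.1
    rw [hHrep, hTH, Finset.filter_true_of_mem hcon]
  obtain ⟨h', e', hh', himp, hex, hchar⟩ := rotate_away hf hh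
    (fun s hs hse => (((hkey s hs).2).mp hse).1) hTS
  set T' := S.filter (fun s => h' s = e') with hT'
  have hT₁T' : T₁ ⊆ T' := by
    intro s hsT₁
    have hsTH : s ∈ TH := (Finset.mem_filter.mp hsT₁).1
    have hsS : s ∈ S := (Finset.filter_subset _ _) hsTH
    have hse : h s = e := ((hkey s hsS).2).mpr
      ⟨(Finset.mem_filter.mp hsTH).2, (Finset.mem_filter.mp hsT₁).2⟩
    exact Finset.mem_filter.mpr ⟨hsS, himp s hsS hse⟩
  have hT₁ne : T₁.Nonempty := filter_nonempty_of_hull (hF₁rep ▸ hF₁ne)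
  have hT'ne : T'.Nonempty := ⟨hT₁ne.choose, hT₁T' hT₁ne.choose_spec⟩
  have hproper' : ∃ s ∈ S, h' s ≠ e' := by
    -- a vertex of H outside F₁ stays strict
    have : ∃ s ∈ TH, g s ≠ d := by
      by_contra hcon
      push_neg at hcon
      apply hF₁.2.1
      rw [hF₁rep, hT₁, Finset.filter_true_of_mem hcon, hHrep]
    obtain ⟨s₂, hs₂TH, hs₂g⟩ := this
    have hs₂S : s₂ ∈ S := (Finset.filter_subset _ _) hs₂TH
    have hs₂f : f s₂ = c := (Finset.mem_filter.mp hs₂TH).2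
    have hs₂h : h s₂ ≠ e := by
      intro habs
      exact hs₂g (((hkey s₂ hs₂S).2.mp habs).2)
    refine ⟨s₂, hs₂S, ?_⟩
    intro habs
    rcases hchar s₂ hs₂S habs with h1 | h1
    · exact hs₂h h1
    · exact h1 hs₂f
  obtain ⟨H', hH'facet, hH'sub⟩ := exists_facet_supset (polyDim Q) S h' e' hh' hT'ne hproper'
    (by rw [← hQ]; omega)
  obtain ⟨s₀, hs₀S, hs₀eq, hs₀f⟩ := hex
  have hs₀H' : s₀ ∈ H' := hH'sub (subset_convexHull ℝ _
    (Finset.mem_coe.mpr (Finset.mem_filter.mpr ⟨hs₀S, hs₀eq⟩)))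
  have hs₀H : s₀ ∉ H := by
    rw [hHrep, hTH]
    exact notmem_filter_face hs₀f
  refine ⟨H', hH'facet, ?_⟩
  -- H ∩ H' is a face of H containing F₁
  have hHQsubQ : H ⊆ Q := hH.1.subset
  obtain ⟨φ, cφ, hφle, hH'eq⟩ := hH'facet.1
  have hHH'face : IsFace H (H ∩ H') := by
    refine ⟨φ, cφ, fun x hx => hφle x (hHQsubQ hx), ?_⟩
    ext x
    constructor
    · rintro ⟨hxH, hxH'⟩
      rw [hH'eq] at hxH'
      exact ⟨hxH, hxH'.2⟩
    · rintro ⟨hxH, hxφ⟩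
      refine ⟨hxH, ?_⟩
      rw [hH'eq]
      exact ⟨hHQsubQ hxH, hxφ⟩
  have hF₁subH : F₁ ⊆ H := hF₁.1.subset
  have hF₁subH' : F₁ ⊆ H' := by
    rw [hF₁rep]
    refine subset_trans ?_ hH'sub
    apply convexHull_mono
    rw [hT₁]
    exact_mod_cast Finset.coe_subset.mpr hT₁T'
  have hHH'ne : H ∩ H' ≠ H := by
    intro habs
    have hHsubH' : H ⊆ H' := fun x hx => by
      have hx2 : x ∈ H ∩ H' := by rw [habs]; exact hx
      exact hx2.2
    have : H = H' := by
      apply face_squeeze hH.1 hHne hHsubH' hH'facet.1.subset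
      have h1 := hH.2.2
      have h2 := hH'facet.2.2
      rw [← hQ] at h2
      omega
    exact hs₀H (this ▸ hs₀H')
  -- squeeze
  have hdimHH' : polyDim (H ∩ H') ≤ polyDim F₁ := by
    have hface' : IsFace (convexHull ℝ (TH : Set (ι → ℝ))) (H ∩ H') := hHrep ▸ hHH'face
    have hlt : polyDim (H ∩ H') < polyDim (convexHull ℝ (TH : Set (ι → ℝ))) := by
      apply face_dim_lt hface' ⟨hF₁ne.choose, hF₁subH hF₁ne.choose_spec,
        hF₁subH' hF₁ne.choose_spec⟩
      rw [← hHrep]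
      exact hHH'ne
    have h2 : polyDim F₁ + 1 = polyDim H := hF₁.2.2
    rw [← hHrep] at hlt
    omega
  exact (face_squeeze hF₁.1 hF₁ne (subset_inter hF₁subH hF₁subH')
    (fun x hx => hx.1) hdimHH').symm

/-- P1: facet count of a nonempty facet. -/
lemma facetCount_facet_le [Finite ι] {S : Finset (ι → ℝ)} {H : Set (ι → ℝ)}
    (hH : IsFacet (convexHull ℝ (S : Set (ι → ℝ))) H) (hHne : H.Nonempty) :
    facetCount H ≤ facetCount (convexHull ℝ (S : Set (ι → ℝ))) := by
  haveI := finite_facets S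
  set Q := convexHull ℝ (S : Set (ι → ℝ)) with hQ
  have core : ∀ F₁ : {F : Set (ι → ℝ) // IsFacet H F}, (F₁ : Set (ι → ℝ)).Nonempty →
      ∃ H', IsFacet Q H' ∧ H ∩ H' = (F₁ : Set (ι → ℝ)) :=
    fun F₁ hne => facet_facet_ext hH hHne F₁.2 hne
  set Φ : {F : Set (ι → ℝ) // IsFacet H F} → {F : Set (ι → ℝ) // IsFacet Q F} :=
    fun F₁ => if hne : (F₁ : Set (ι → ℝ)).Nonempty then
        ⟨(core F₁ hne).choose, (core F₁ hne).choose_spec.1⟩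
      else ⟨H, hH⟩ with hΦ
  have hinj : Function.Injective Φ := by
    intro a b hab
    rw [hΦ] at hab
    simp only at hab
    by_cases ha : (a : Set (ι → ℝ)).Nonempty <;> by_cases hb : (b : Set (ι → ℝ)).Nonempty
    · rw [dif_pos ha, dif_pos hb] at hab
      have h1 := (core a ha).choose_spec.2
      have h2 := (core b hb).choose_spec.2
      have : (core a ha).choose = (core b hb).choose := congrArg Subtype.val hab
      apply Subtype.ext
      rw [← h1, ← h2, this]
    · rw [dif_pos ha, dif_neg hb] at hab
      exfalso
      have h1 := (core a ha).choose_spec.2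
      have : (core a ha).choose = H := congrArg Subtype.val hab
      rw [this] at h1
      simp only [Set.inter_self] at h1
      exact a.2.2.1 h1.symm
    · rw [dif_neg ha, dif_pos hb] at hab
      exfalso
      have h1 := (core b hb).choose_spec.2
      have : H = (core b hb).choose := congrArg Subtype.val hab
      rw [← this] at h1
      simp only [Set.inter_self] at h1
      exact b.2.2.1 h1.symm
    · apply Subtype.ext
      rw [Set.not_nonempty_iff_eq_empty] at ha hb
      rw [ha, hb]
  exact Nat.card_le_card_of_injective Φ hinj

/-- main: faces of polytopes have at most as many facets. -/
lemma facetCount_face_le_aux [Finite ι] : ∀ (n : ℕ) (S : Finset (ι → ℝ)) (R : Set (ι → ℝ)),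
    polyDim (convexHull ℝ (S : Set (ι → ℝ))) ≤ n →
    IsFace (convexHull ℝ (S : Set (ι → ℝ))) R →
    facetCount R ≤ facetCount (convexHull ℝ (S : Set (ι → ℝ))) := by
  intro n
  induction n with
  | zero =>
    intro S R hdim hR
    by_cases hRe : R = ∅
    · rw [hRe, facetCount_empty]; exact Nat.zero_le _
    by_cases hRQ : R = convexHull ℝ (S : Set (ι → ℝ))
    · rw [hRQ]
    · exfalso
      have := face_dim_lt hR (Set.nonempty_iff_ne_empty.mpr hRe) hRQ
      omega
  | succ n IH =>
    intro S R hdim hR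
    by_cases hRe : R = ∅
    · rw [hRe, facetCount_empty]; exact Nat.zero_le _
    by_cases hRQ : R = convexHull ℝ (S : Set (ι → ℝ))
    · rw [hRQ]
    · have hRne : R.Nonempty := Set.nonempty_iff_ne_empty.mpr hRe
      obtain ⟨h, e, hh, hRrep⟩ := isFace_iff.mp hR
      set T₁ := S.filter (fun s => h s = e) with hT₁
      have hT₁ne : T₁.Nonempty := filter_nonempty_of_hull (hRrep ▸ hRne)
      have hproper : ∃ s ∈ S, h s ≠ e := by
        by_contra hcon
        push_neg at hcon
        exact hRQ (by rw [hRrep, hT₁, Finset.filter_true_of_mem hcon])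
      obtain ⟨H, hHfacet, hHsub⟩ := exists_facet_supset
        (polyDim (convexHull ℝ (S : Set (ι → ℝ)))) S h e hh hT₁ne hproper (by omega)
      have hRsubH : R ⊆ H := hRrep ▸ hHsub
      have hHne : H.Nonempty := ⟨hRne.choose, hRsubH hRne.choose_spec⟩
      obtain ⟨f, c, hf, hHrep⟩ := isFace_iff.mp hHfacet.1
      set TH := S.filter (fun s => f s = c) with hTH
      -- R is a face of H
      have hRfaceH : IsFace (convexHull ℝ (TH : Set (ι → ℝ))) R := by
        refine ⟨h, e, ?_, ?_⟩
        · intro x hx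
          have hxQ : x ∈ convexHull ℝ (S : Set (ι → ℝ)) := by
            rw [← hHrep] at hx
            exact hHfacet.1.subset hx
          have := filter_face_eq hh
          exact hull_le (fun s hs => hh s hs) x hxQ
        · apply Set.Subset.antisymm
          · intro x hx
            refine ⟨by rw [← hHrep]; exact hRsubH hx, ?_⟩
            have : x ∈ {y ∈ convexHull ℝ (S : Set (ι → ℝ)) | h y = e} := by
              rw [← filter_face_eq hh, ← hT₁, ← hRrep]
              exact hx
            exact this.2
          · intro x hx
            have hxQ : x ∈ convexHull ℝ (S : Set (ι → ℝ)) := by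
              have := hx.1
              rw [← hHrep] at this
              exact hHfacet.1.subset this
            rw [hRrep, hT₁, filter_face_eq hh]
            exact ⟨hxQ, hx.2⟩
      have hdimH : polyDim (convexHull ℝ (TH : Set (ι → ℝ))) ≤ n := by
        have := hHfacet.2.2
        rw [hHrep] at this
        omega
      calc facetCount R ≤ facetCount (convexHull ℝ (TH : Set (ι → ℝ))) := IH TH R hdimH hRfaceH
        _ = facetCount H := by rw [← hHrep]
        _ ≤ facetCount (convexHull ℝ (S : Set (ι → ℝ))) := facetCount_facet_le hHfacet hHne

lemma facetCount_face_le [Finite ι] {P R : Set (ι → ℝ)} (hP : IsPolytope P)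
    (hR : IsFace P R) : facetCount R ≤ facetCount P := by
  obtain ⟨S, rfl⟩ := hP
  exact facetCount_face_le_aux (polyDim (convexHull ℝ (S : Set (ι → ℝ)))) S R le_rfl hR

section CorP
variable {V : Type} (G : SimpleGraph V) (u v : V)

/-- generator set of the correlation polytope -/
def corGens : Set ((V ⊕ ↥G.edgeSet) → ℝ) :=
  {x | ∃ X : Set V,
    (∀ v : V, x (Sum.inl v) = if v ∈ X then 1 else 0) ∧
    (∀ e : G.edgeSet, x (Sum.inr e) = if ∀ v ∈ (e : Sym2 V), v ∈ X then 1 else 0)}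

lemma corPolytope_eq_hull : corPolytope G = convexHull ℝ (corGens G) := rfl

/-- generator vector of a vertex set -/
def genVec (X : Set V) : (V ⊕ ↥G.edgeSet) → ℝ :=
  Sum.elim (fun w => if w ∈ X then 1 else 0)
    (fun e => if ∀ w ∈ (e : Sym2 V), w ∈ X then 1 else 0)

lemma genVec_mem (X : Set V) : genVec G X ∈ corGens G :=
  ⟨X, fun _ => rfl, fun _ => rfl⟩

lemma corGens_eq_range : corGens G = Set.range (genVec G) := by
  ext x
  constructor
  · rintro ⟨X, h1, h2⟩
    refine ⟨X, ?_⟩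
    funext i
    cases i with
    | inl w => exact (h1 w).symm
    | inr e => exact (h2 e).symm
  · rintro ⟨X, rfl⟩
    exact genVec_mem G X

lemma corGens_finite [Finite V] : (corGens G).Finite := by
  rw [corGens_eq_range]
  exact Set.finite_range _

lemma corPolytope_isPolytope [Finite V] : IsPolytope (corPolytope G) :=
  ⟨(corGens_finite G).toFinset, by rw [corPolytope_eq_hull, Set.Finite.coe_toFinset]⟩

variable (huv : G.Adj u v)

lemma edge_iff_pair {X : Set V} :
    (∀ w ∈ (s(u, v) : Sym2 V), w ∈ X) ↔ (u ∈ X ∧ v ∈ X) := by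
  constructor
  · intro h
    exact ⟨h u (by simp), h v (by simp)⟩
  · rintro ⟨h1, h2⟩ w hw
    rw [Sym2.mem_iff] at hw
    rcases hw with rfl | rfl <;> assumption
end CorP

section Face
variable {V : Type} {G : SimpleGraph V} {u v : V} (huv : G.Adj u v)

/-- the edge `uv` as an element of the edge set -/
def euv (huv : G.Adj u v) : ↥G.edgeSet := ⟨s(u, v), G.mem_edgeSet.mpr huv⟩

/-- the face functional -/
def faceFun (huv : G.Adj u v) : ((V ⊕ ↥G.edgeSet) → ℝ) →ₗ[ℝ] ℝ :=
  (2 : ℝ) • LinearMap.proj (Sum.inr (euv huv)) - LinearMap.proj (Sum.inl u)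
    - LinearMap.proj (Sum.inl v)

lemma faceFun_apply (x : (V ⊕ ↥G.edgeSet) → ℝ) :
    faceFun huv x = 2 * x (Sum.inr (euv huv)) - x (Sum.inl u) - x (Sum.inl v) := by
  simp only [faceFun, LinearMap.sub_apply, LinearMap.smul_apply, LinearMap.proj_apply,
    Function.eval, smul_eq_mul]
  try ring

/-- edge coordinate at most vertex coordinate, on the polytope -/
lemma edge_le_vertex (x : (V ⊕ ↥G.edgeSet) → ℝ) (hx : x ∈ corPolytope G) :
    x (Sum.inr (euv huv)) ≤ x (Sum.inl u) ∧ x (Sum.inr (euv huv)) ≤ x (Sum.inl v) := by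
  constructor
  · have := hull_le (s := corGens G)
      (f := (LinearMap.proj (Sum.inr (euv huv)) : ((V ⊕ ↥G.edgeSet) → ℝ) →ₗ[ℝ] ℝ)
        - LinearMap.proj (Sum.inl u)) (c := 0)
      ?_ x hx
    · simpa [LinearMap.proj, sub_nonpos] using this
    · rintro y ⟨X, h1, h2⟩
      have e1 := h1 u
      have e2 := h2 (euv huv)
      simp only [LinearMap.sub_apply, LinearMap.proj_apply, Function.eval]
      rw [e1, e2]
      have : (∀ w ∈ ((euv huv : ↥G.edgeSet) : Sym2 V), w ∈ X) ↔ (u ∈ X ∧ v ∈ X) :=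
        edge_iff_pair u v
      by_cases hu : u ∈ X <;> by_cases hv : v ∈ X <;>
        simp [this, hu, hv]
  · have := hull_le (s := corGens G)
      (f := (LinearMap.proj (Sum.inr (euv huv)) : ((V ⊕ ↥G.edgeSet) → ℝ) →ₗ[ℝ] ℝ)
        - LinearMap.proj (Sum.inl v)) (c := 0)
      ?_ x hx
    · simpa [LinearMap.proj, sub_nonpos] using this
    · rintro y ⟨X, h1, h2⟩
      have e1 := h1 v
      have e2 := h2 (euv huv)
      simp only [LinearMap.sub_apply, LinearMap.proj_apply, Function.eval]
      rw [e1, e2]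
      have : (∀ w ∈ ((euv huv : ↥G.edgeSet) : Sym2 V), w ∈ X) ↔ (u ∈ X ∧ v ∈ X) :=
        edge_iff_pair u v
      by_cases hu : u ∈ X <;> by_cases hv : v ∈ X <;>
        simp [this, hu, hv]

lemma faceFun_le (x : (V ⊕ ↥G.edgeSet) → ℝ) (hx : x ∈ corPolytope G) :
    faceFun huv x ≤ 0 := by
  obtain ⟨h1, h2⟩ := edge_le_vertex huv x hx
  rw [faceFun_apply]
  linarith

/-- Part 1: F is the zero set of the face functional. -/
lemma face_eq_zero_set :
    {x ∈ corPolytope G |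
      x (Sum.inl u) = x (Sum.inr (euv huv)) ∧ x (Sum.inr (euv huv)) = x (Sum.inl v)} =
    {x ∈ corPolytope G | faceFun huv x = 0} := by
  ext x
  simp only [Set.mem_sep_iff, faceFun_apply]
  constructor
  · rintro ⟨hx, h1, h2⟩
    exact ⟨hx, by linarith⟩
  · rintro ⟨hx, h⟩
    obtain ⟨h1, h2⟩ := edge_le_vertex huv x hx
    exact ⟨hx, by linarith, by linarith⟩

lemma isFace_F : IsFace (corPolytope G)
    {x ∈ corPolytope G |
      x (Sum.inl u) = x (Sum.inr (euv huv)) ∧ x (Sum.inr (euv huv)) = x (Sum.inl v)} :=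
  ⟨faceFun huv, 0, fun x hx => faceFun_le huv x hx, face_eq_zero_set huv⟩

/-- value of the face functional on a generator -/
lemma faceFun_genVec (X : Set V) :
    faceFun huv (genVec G X) = 0 ↔ (u ∈ X ↔ v ∈ X) := by
  rw [faceFun_apply]
  show 2 * (if ∀ w ∈ ((euv huv : ↥G.edgeSet) : Sym2 V), w ∈ X then (1:ℝ) else 0)
      - (if u ∈ X then (1:ℝ) else 0) - (if v ∈ X then (1:ℝ) else 0) = 0 ↔ _
  have hiff : (∀ w ∈ ((euv huv : ↥G.edgeSet) : Sym2 V), w ∈ X) ↔ (u ∈ X ∧ v ∈ X) :=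
    edge_iff_pair u v
  by_cases hu : u ∈ X <;> by_cases hv : v ∈ X <;> simp [hiff, hu, hv] <;> norm_num

end Face

section Contract
variable {V : Type} {G : SimpleGraph V} {u v : V}

/-- endpoint replacement map -/
def m2 (u v : V) : {w : V // w ≠ v} → V := fun w => if w.1 = u then v else w.1

/-- the lifted edge of a contracted edge -/
def liftEdge (G : SimpleGraph V) (u v : V) (e : ↥(contractEdge G u v).edgeSet) : Sym2 V :=
  if Sym2.map Subtype.val (e : Sym2 {w : V // w ≠ v}) ∈ G.edgeSet then
    Sym2.map Subtype.val (e : Sym2 {w : V // w ≠ v})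
  else Sym2.map (m2 u v) (e : Sym2 {w : V // w ≠ v})

lemma liftEdge_mem (e : ↥(contractEdge G u v).edgeSet) : liftEdge G u v e ∈ G.edgeSet := by
  obtain ⟨e', he'⟩ := e
  unfold liftEdge
  simp only
  split_ifs with hm
  · exact hm
  · induction e' using Sym2.ind with
  | _ a b =>
    rw [SimpleGraph.mem_edgeSet] at he'
    obtain ⟨hne, hcase⟩ := he'
    rcases hcase with hab | ⟨hau, hvb⟩ | ⟨hbu, hav⟩
    · exfalso
      apply hm
      rw [Sym2.map_pair_eq, SimpleGraph.mem_edgeSet]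
      exact hab
    · have hbu : b.1 ≠ u := by
        intro habs
        exact hne (Subtype.ext (hau.trans habs.symm))
      rw [Sym2.map_pair_eq, SimpleGraph.mem_edgeSet]
      unfold m2
      rw [if_pos hau, if_neg hbu]
      exact hvb
    · have hau : a.1 ≠ u := by
        intro habs
        exact hne (Subtype.ext (habs.trans hbu.symm))
      rw [Sym2.map_pair_eq, SimpleGraph.mem_edgeSet]
      unfold m2
      rw [if_neg hau, if_pos hbu]
      exact hav

lemma liftEdge_spec (e : ↥(contractEdge G u v).edgeSet) {X : Set V} (hX : u ∈ X ↔ v ∈ X) :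
    ((∀ z ∈ liftEdge G u v e, z ∈ X) ↔
      (∀ w : {w : V // w ≠ v}, w ∈ (e : Sym2 {w : V // w ≠ v}) → w.1 ∈ X)) := by
  obtain ⟨e', he'⟩ := e
  induction e' using Sym2.ind with
  | _ a b =>
    have hm2 : ∀ w : {w : V // w ≠ v}, (m2 u v w ∈ X ↔ w.1 ∈ X) := by
      intro w
      unfold m2
      split_ifs with hw
      · rw [hw, ← hX]
      · rfl
    unfold liftEdge
    simp only
    split_ifs with hm
    · rw [Sym2.map_pair_eq]
      constructor
      · intro h w hw
        rw [Sym2.mem_iff] at hw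
        rcases hw with rfl | rfl
        · exact h w.1 (by rw [Sym2.mem_iff]; left; rfl)
        · exact h w.1 (by rw [Sym2.mem_iff]; right; rfl)
      · intro h z hz
        rw [Sym2.mem_iff] at hz
        rcases hz with rfl | rfl
        · exact h a (by rw [Sym2.mem_iff]; left; rfl)
        · exact h b (by rw [Sym2.mem_iff]; right; rfl)
    · rw [Sym2.map_pair_eq]
      constructor
      · intro h w hw
        rw [Sym2.mem_iff] at hw
        rcases hw with rfl | rfl
        · exact (hm2 w).mp (h (m2 u v w) (by rw [Sym2.mem_iff]; left; rfl))
        · exact (hm2 w).mp (h (m2 u v w) (by rw [Sym2.mem_iff]; right; rfl))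
      · intro h z hz
        rw [Sym2.mem_iff] at hz
        rcases hz with rfl | rfl
        · exact (hm2 a).mpr (h a (by rw [Sym2.mem_iff]; left; rfl))
        · exact (hm2 b).mpr (h b (by rw [Sym2.mem_iff]; right; rfl))

/-- the index map -/
def idxMap (G : SimpleGraph V) (u v : V) :
    ({w : V // w ≠ v} ⊕ ↥(contractEdge G u v).edgeSet) → (V ⊕ ↥G.edgeSet) :=
  Sum.elim (fun w => Sum.inl w.1) (fun e => Sum.inr ⟨liftEdge G u v e, liftEdge_mem e⟩)

/-- the projection -/
def contractMap (G : SimpleGraph V) (u v : V) :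
    ((V ⊕ ↥G.edgeSet) → ℝ) →ᵃ[ℝ] (({w : V // w ≠ v} ⊕ ↥(contractEdge G u v).edgeSet) → ℝ) :=
  (LinearMap.funLeft ℝ ℝ (idxMap G u v)).toAffineMap

/-- extension of a vertex set of the contraction to one of `G` -/
def extSet (u v : V) (hne : u ≠ v) (X' : Set {w : V // w ≠ v}) : Set V :=
  {w : V | if h : w = v then (⟨u, hne⟩ : {w : V // w ≠ v}) ∈ X' else (⟨w, h⟩ : {w : V // w ≠ v}) ∈ X'}

lemma extSet_spec (hne : u ≠ v) (X' : Set {w : V // w ≠ v}) :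
    (u ∈ extSet u v hne X' ↔ v ∈ extSet u v hne X') ∧
    (∀ w : {w : V // w ≠ v}, (w.1 ∈ extSet u v hne X' ↔ w ∈ X')) := by
  constructor
  · unfold extSet
    simp only [Set.mem_setOf_eq]
    rw [dif_neg hne]
    simp
  · intro w
    unfold extSet
    simp only [Set.mem_setOf_eq]
    rw [dif_neg w.2]

/-- image of the constrained generators -/
lemma image_gens (huv : G.Adj u v) :
    (contractMap G u v) '' {x ∈ corGens G | faceFun huv x = 0} =
      corGens (contractEdge G u v) := by
  have hne : u ≠ v := G.ne_of_adj huv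
  ext y
  constructor
  · rintro ⟨x, ⟨hxgens, hxf⟩, rfl⟩
    obtain ⟨X, h1, h2⟩ := hxgens
    have hX : u ∈ X ↔ v ∈ X := by
      rw [← faceFun_genVec huv X]
      · have hxeq : x = genVec G X := by
          funext i
          cases i with
          | inl w => exact h1 w
          | inr e => exact h2 e
        rw [← hxeq]
        exact hxf
    refine ⟨{w | w.1 ∈ X}, ?_, ?_⟩
    · intro w
      show x (idxMap G u v (Sum.inl w)) = _
      unfold idxMap
      simp only [Sum.elim_inl]
      rw [h1 w.1]
      rfl
    · intro e
      show x (idxMap G u v (Sum.inr e)) = _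
      unfold idxMap
      simp only [Sum.elim_inr]
      rw [h2 ⟨liftEdge G u v e, liftEdge_mem e⟩]
      simp only [Set.mem_setOf_eq]
      have hspec := liftEdge_spec e hX
      by_cases hall : ∀ w : {w : V // w ≠ v}, w ∈ (e : Sym2 {w : V // w ≠ v}) → w.1 ∈ X
      · rw [if_pos (hspec.mpr hall), if_pos hall]
      · rw [if_neg (fun h => hall (hspec.mp h)), if_neg hall]
  · rintro ⟨X', hy1, hy2⟩
    set X := extSet u v hne X' with hXdef
    obtain ⟨hXuv, hXw⟩ := extSet_spec hne X'
    refine ⟨genVec G X, ⟨genVec_mem G X, (faceFun_genVec huv X).mpr hXuv⟩, ?_⟩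
    funext i
    cases i with
    | inl w =>
      show genVec G X (idxMap G u v (Sum.inl w)) = y (Sum.inl w)
      unfold idxMap
      simp only [Sum.elim_inl]
      rw [hy1 w]
      show (if w.1 ∈ X then (1:ℝ) else 0) = _
      by_cases hw : w ∈ X'
      · rw [if_pos ((hXw w).mpr hw), if_pos hw]
      · rw [if_neg (fun h => hw ((hXw w).mp h)), if_neg hw]
    | inr e =>
      show genVec G X (idxMap G u v (Sum.inr e)) = y (Sum.inr e)
      unfold idxMap
      simp only [Sum.elim_inr]
      rw [hy2 e]
      show (if ∀ z ∈ liftEdge G u v e, z ∈ X then (1:ℝ) else 0) = _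
      have hspec := liftEdge_spec e hXuv
      by_cases hall : ∀ w : {w : V // w ≠ v}, w ∈ (e : Sym2 {w : V // w ≠ v}) → w ∈ X'
      · rw [if_pos (hspec.mpr (fun w hw => (hXw w).mpr (hall w hw))),
          if_pos hall]
      · rw [if_neg, if_neg hall]
        intro h
        exact hall (fun w hw => (hXw w).mp (hspec.mp h w hw))

/-- Part 2: the affine map takes F onto the contracted correlation polytope. -/
lemma image_F (huv : G.Adj u v) :
    (contractMap G u v) '' {x ∈ corPolytope G |
        x (Sum.inl u) = x (Sum.inr (euv huv)) ∧ x (Sum.inr (euv huv)) = x (Sum.inl v)} =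
      corPolytope (contractEdge G u v) := by
  rw [face_eq_zero_set huv]
  have h1 : {x ∈ corPolytope G | faceFun huv x = 0} =
      convexHull ℝ {x ∈ corGens G | faceFun huv x = 0} :=
    faceEq (fun x hx => faceFun_le huv x (subset_convexHull ℝ _ hx))
  rw [h1]
  show (LinearMap.funLeft ℝ ℝ (idxMap G u v)) '' _ = _
  rw [LinearMap.image_convexHull]
  rw [corPolytope_eq_hull]
  congr 1
  exact image_gens huv

end Contract

variable {ι' : Type*}

/-- every polytope has an extension -/
lemma exists_extension [Finite ι'] {P : Set (ι' → ℝ)} (hP : IsPolytope P) :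
    ∃ m, m ∈ { m | ∃ (p : ℕ) (Q : Set (Fin p → ℝ)), IsExtensionOf Q P ∧ facetCount Q = m } := by
  have := Fintype.ofFinite ι'
  set n := Fintype.card ι' with hn
  set e : ι' ≃ Fin n := Fintype.equivFin ι' with he
  set ρ : (ι' → ℝ) →ₗ[ℝ] (Fin n → ℝ) := LinearMap.funLeft ℝ ℝ ⇑e.symm with hρ
  set π₀ : (Fin n → ℝ) →ₗ[ℝ] (ι' → ℝ) := LinearMap.funLeft ℝ ℝ ⇑e with hπ₀
  refine ⟨facetCount (ρ '' P), n, ρ '' P, ⟨?_, π₀.toAffineMap, ?_⟩, rfl⟩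
  · obtain ⟨S, rfl⟩ := hP
    refine ⟨S.image ρ, ?_⟩
    rw [Finset.coe_image, LinearMap.image_convexHull]
  · show ⇑π₀ '' (⇑ρ '' P) = P
    rw [← Set.image_comp]
    have : ⇑π₀ ∘ ⇑ρ = id := by
      funext x
      simp only [Function.comp_apply, hπ₀, hρ, LinearMap.funLeft_apply]
      funext i
      simp
    rw [this, Set.image_id]

/-- key xc comparison -/
lemma xc_le_of_face_surj {ι₁ ι₂ : Type*} [Finite ι₁] {P : Set (ι₁ → ℝ)} {F : Set (ι₁ → ℝ)}
    {P' : Set (ι₂ → ℝ)} (hP : IsPolytope P)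
    (f : (ι₁ → ℝ) →ₗ[ℝ] ℝ) (hfle : ∀ x ∈ P, f x ≤ 0) (hFeq : F = {x ∈ P | f x = 0})
    (π : (ι₁ → ℝ) →ᵃ[ℝ] (ι₂ → ℝ)) (hπ : ⇑π '' F = P') :
    xc P' ≤ xc P := by
  have hSPne := exists_extension hP
  have hmem := Nat.sInf_mem hSPne
  obtain ⟨p, Q, ⟨⟨SQ, hSQ⟩, σ, hσ⟩, hcount⟩ := hmem
  set ψ : (Fin p → ℝ) →ᵃ[ℝ] ℝ := (f.toAffineMap.comp σ) with hψdef
  have hψx : ∀ x, ψ x = f (σ x) := fun x => rfl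
  have hlin : ∀ x, ψ.linear x = ψ x - ψ 0 := by
    intro x
    have := congrFun (AffineMap.decomp ψ) x
    simp only [Pi.add_apply] at this
    rw [this]
    ring
  set QF := {x ∈ Q | ψ.linear x = -(ψ 0)} with hQF
  have hσmem : ∀ x ∈ Q, σ x ∈ P := by
    intro x hx
    rw [← hσ]
    exact Set.mem_image_of_mem _ hx
  have hle : ∀ x ∈ Q, ψ.linear x ≤ -(ψ 0) := by
    intro x hx
    rw [hlin]
    have := hfle (σ x) (hσmem x hx)
    rw [← hψx] at this
    linarith
  have hQface : IsFace Q QF := ⟨ψ.linear, -(ψ 0), hle, rfl⟩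
  have hσQF : ⇑σ '' QF = F := by
    rw [hFeq]
    ext y
    constructor
    · rintro ⟨x, ⟨hxQ, hx0⟩, rfl⟩
      refine ⟨hσmem x hxQ, ?_⟩
      rw [← hψx]
      rw [hlin] at hx0
      linarith
    · rintro ⟨hyP, hy0⟩
      rw [← hσ] at hyP
      obtain ⟨x, hxQ, rfl⟩ := hyP
      refine ⟨x, ⟨hxQ, ?_⟩, rfl⟩
      rw [hlin]
      rw [← hψx] at hy0
      linarith
  have hQFpoly : IsPolytope QF := by
    refine ⟨SQ.filter (fun s => ψ.linear s = -(ψ 0)), ?_⟩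
    rw [filter_face_eq (fun s hs => hle s (by rw [hSQ]; exact subset_convexHull ℝ _ hs)), ← hSQ,
      hQF]
  have hext' : IsExtensionOf QF P' := by
    refine ⟨hQFpoly, π.comp σ, ?_⟩
    rw [AffineMap.coe_comp, Set.image_comp, hσQF, hπ]
  calc xc P' ≤ facetCount QF := Nat.sInf_le ⟨p, QF, hext', rfl⟩
    _ ≤ facetCount Q := facetCount_face_le ⟨SQ, hSQ⟩ hQface
    _ = xc P := hcount


/-- Contracting an edge: the set `F = {x ∈ COR(G) : x_u = x_{uv} = x_v}` is a face of
`COR(G)`, some affine map takes `F` onto `COR(G / uv)`, and consequently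
`xc(COR(G / uv)) ≤ xc(COR(G))`. -/
theorem corPolytope_contractEdge {V : Type} [Fintype V] (G : SimpleGraph V)
    (u v : V) (huv : G.Adj u v)
    (F : Set ((V ⊕ ↥G.edgeSet) → ℝ))
    (hF : F = {x ∈ corPolytope G |
      x (Sum.inl u) = x (Sum.inr ⟨s(u, v), G.mem_edgeSet.mpr huv⟩) ∧
      x (Sum.inr ⟨s(u, v), G.mem_edgeSet.mpr huv⟩) = x (Sum.inl v)}) :
    IsFace (corPolytope G) F ∧
    (∃ π : ((V ⊕ ↥G.edgeSet) → ℝ) →ᵃ[ℝ]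
        (({w : V // w ≠ v} ⊕ ↥(contractEdge G u v).edgeSet) → ℝ),
      ⇑π '' F = corPolytope (contractEdge G u v)) ∧
    xc (corPolytope (contractEdge G u v)) ≤ xc (corPolytope G) := by
  subst hF
  refine ⟨isFace_F huv, ⟨contractMap G u v, image_F huv⟩, ?_⟩
  exact xc_le_of_face_surj (corPolytope_isPolytope G) (faceFun huv)
    (fun x hx => faceFun_le huv x hx) (face_eq_zero_set huv)
    (contractMap G u v) (image_F huv)

end
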